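/- The function f₃(y) = log(y)² + 2·Li₂(−y), where Li₂(z) = Σ_{p≥1} z^p/p², satisfies the fourth-order ODE y³(y+1)f⁗ + y²(6+8y)f‴ + y(7+14y)f″ + (1+4y)f′ = 0 for 0 < y < 1. -/

import Mathlib

/-- The dilogarithm `Li₂(z) = Σ_{p≥1} z^p/p²`. -/
noncomputable def dilog (z : ℝ) : ℝ := ∑' p : ℕ, z ^ (p + 1) / ((p : ℝ) + 1) ^ 2

open Real

/-- Closed form of `f₃'`. -/
noncomputable def G0 (y : ℝ) : ℝ := 2 * (Real.log y - Real.log (1 + y)) / y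

/-- Closed form of `f₃''`. -/
noncomputable def G1 (y : ℝ) : ℝ :=
  2 / (y ^ 2 * (1 + y)) - 2 * (Real.log y - Real.log (1 + y)) / y ^ 2

/-- Closed form of `f₃'''`. -/
noncomputable def G2 (y : ℝ) : ℝ :=
  -(6 + 8 * y) / (y ^ 3 * (1 + y) ^ 2) + 4 * (Real.log y - Real.log (1 + y)) / y ^ 3

/-- Closed form of `f₃''''`. -/
noncomputable def G3 (y : ℝ) : ℝ :=
  (22 + 54 * y + 36 * y ^ 2) / (y ^ 4 * (1 + y) ^ 3)
    - 12 * (Real.log y - Real.log (1 + y)) / y ^ 4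

lemma hasDerivAt_dilog_neg {y : ℝ} (h0 : 0 < y) (h1 : y < 1) :
    HasDerivAt (fun u : ℝ => dilog (-u)) (-Real.log (1 + y) / y) y := by
  set r : ℝ := (1 + y) / 2 with hr
  have hr0 : 0 < r := by positivity
  have hyr : y < r := by rw [hr]; linarith
  have hr1 : r < 1 := by rw [hr]; linarith
  have key : HasDerivAt (fun z : ℝ => ∑' p : ℕ, (-z) ^ (p + 1) / ((p : ℝ) + 1) ^ 2)
      (∑' p : ℕ, -(-y) ^ p / ((p : ℝ) + 1)) y := by
    apply hasDerivAt_tsum_of_isPreconnected (u := fun p : ℕ => r ^ p)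
      (g := fun (p : ℕ) (z : ℝ) => (-z) ^ (p + 1) / ((p : ℝ) + 1) ^ 2)
      (g' := fun (p : ℕ) (t : ℝ) => -(-t) ^ p / ((p : ℝ) + 1))
      (summable_geometric_of_lt_one hr0.le hr1) isOpen_Ioo
      (isPreconnected_Ioo (a := (0:ℝ)) (b := r)) (y₀ := y)
    · intro p t _
      have h : HasDerivAt (fun z : ℝ => (-z) ^ (p + 1) / ((p : ℝ) + 1) ^ 2)
          ((↑(p + 1) * (-t) ^ p * (-1)) / ((p : ℝ) + 1) ^ 2) t := by
        exact (((hasDerivAt_pow (p + 1) (-t)).comp t (hasDerivAt_id t).neg)).div_const _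
      refine h.congr_deriv ?_
      have hne : ((p : ℝ) + 1) ≠ 0 := by positivity
      push_cast
      rw [div_eq_div_iff (by positivity) hne]
      ring
    · intro p t ht
      have ht0 : 0 ≤ t := le_of_lt ht.1
      have htr : t ≤ r := le_of_lt ht.2
      have hb : |(-t) ^ p| ≤ r ^ p := by
        rw [abs_pow, abs_neg, abs_of_nonneg ht0]
        exact pow_le_pow_left₀ ht0 htr p
      have hpc : (0:ℝ) ≤ (p : ℝ) := Nat.cast_nonneg p
      have hp1 : (1:ℝ) ≤ |(p : ℝ) + 1| := by
        rw [abs_of_pos (by linarith)]; linarith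
      calc ‖-(-t) ^ p / ((p : ℝ) + 1)‖ = |(-t) ^ p| / |(p : ℝ) + 1| := by
            rw [Real.norm_eq_abs, abs_div, abs_neg]
        _ ≤ r ^ p / 1 := div_le_div₀ (by positivity) hb one_pos hp1
        _ = r ^ p := div_one _
    · exact ⟨h0, hyr⟩
    · apply Summable.of_norm_bounded (g := fun p : ℕ => r ^ (p + 1))
        ((summable_geometric_of_lt_one hr0.le hr1).comp_injective (add_left_injective 1))
      intro p
      have hy0 : 0 ≤ y := h0.le
      rw [Real.norm_eq_abs, abs_div, abs_pow, abs_neg, abs_of_nonneg hy0]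
      have : y ^ (p + 1) ≤ r ^ (p + 1) := pow_le_pow_left₀ hy0 hyr.le _
      have h1 : (1:ℝ) ≤ |((p : ℝ) + 1) ^ 2| := by
        rw [abs_of_pos (by positivity)]
        have hpc : (0:ℝ) ≤ (p : ℝ) := Nat.cast_nonneg p
        nlinarith
      calc y ^ (p + 1) / |((p : ℝ) + 1) ^ 2| ≤ y ^ (p + 1) / 1 :=
            div_le_div_of_nonneg_left (by positivity) one_pos h1
        _ = y ^ (p + 1) := div_one _
        _ ≤ r ^ (p + 1) := this
    · exact ⟨h0, hyr⟩
  have hsum : (∑' p : ℕ, -(-y) ^ p / ((p : ℝ) + 1)) = -Real.log (1 + y) / y := by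
    have habs : |(-y)| < 1 := by rw [abs_neg, abs_of_pos h0]; exact h1
    have h := Real.hasSum_pow_div_log_of_abs_lt_one habs
    have h2 : HasSum (fun n : ℕ => (-y) ^ (n + 1) / ((n : ℝ) + 1) / y)
        (-Real.log (1 - -y) / y) := h.div_const y
    have h3 : (fun n : ℕ => (-y) ^ (n + 1) / ((n : ℝ) + 1) / y)
        = fun n : ℕ => -(-y) ^ n / ((n : ℝ) + 1) := by
      funext n
      have : (-y) ^ (n + 1) = -y * (-y) ^ n := by ring
      rw [this]
      field_simp
    rw [h3] at h2
    rw [h2.tsum_eq]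
    norm_num
  rw [← hsum]
  exact key

lemma deriv_f_eq {y : ℝ} (h0 : 0 < y) (h1 : y < 1) :
    HasDerivAt (fun u : ℝ => (Real.log u) ^ 2 + 2 * dilog (-u)) (G0 y) y := by
  have hlog : HasDerivAt (fun u : ℝ => (Real.log u) ^ 2) (2 * Real.log y ^ 1 * y⁻¹) y :=
    (Real.hasDerivAt_log h0.ne').pow 2
  have hd := (hasDerivAt_dilog_neg h0 h1).const_mul 2
  have h := hlog.add hd
  refine h.congr_deriv ?_
  unfold G0
  field_simp
  ring

lemma hasDerivAt_G0 {y : ℝ} (h0 : 0 < y) : HasDerivAt G0 (G1 y) y := by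
  have hy1 : (0:ℝ) < 1 + y := by linarith
  have hlog : HasDerivAt Real.log y⁻¹ y := Real.hasDerivAt_log h0.ne'
  have hlog1 : HasDerivAt (fun u : ℝ => Real.log (1 + u)) (1 + y)⁻¹ y := by
    have := (Real.hasDerivAt_log hy1.ne').comp y
      ((hasDerivAt_id y).const_add 1)
    simpa [Function.comp_def] using this
  have h := ((hlog.sub hlog1).const_mul 2).div (hasDerivAt_id y) h0.ne'
  refine h.congr_deriv ?_
  unfold G1
  simp only [Pi.sub_apply, id]
  field_simp
  ring

lemma hasDerivAt_G1 {y : ℝ} (h0 : 0 < y) : HasDerivAt G1 (G2 y) y := by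
  have hy1 : (0:ℝ) < 1 + y := by linarith
  have hlog : HasDerivAt Real.log y⁻¹ y := Real.hasDerivAt_log h0.ne'
  have hlog1 : HasDerivAt (fun u : ℝ => Real.log (1 + u)) (1 + y)⁻¹ y := by
    have := (Real.hasDerivAt_log hy1.ne').comp y ((hasDerivAt_id y).const_add 1)
    simpa [Function.comp_def] using this
  have hden : HasDerivAt (fun u : ℝ => u ^ 2 * (1 + u))
      ((2 * y ^ 1) * (1 + y) + y ^ 2 * 1) y :=
    (hasDerivAt_pow 2 y).mul ((hasDerivAt_id y).const_add 1)
  have hdenne : y ^ 2 * (1 + y) ≠ 0 := by positivity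
  have ha := (hasDerivAt_const y (2:ℝ)).div hden hdenne
  have hb := ((hlog.sub hlog1).const_mul 2).div (hasDerivAt_pow 2 y) (by positivity)
  have h := ha.sub hb
  refine h.congr_deriv ?_
  unfold G2
  simp only [Pi.sub_apply, id]
  field_simp
  ring

lemma hasDerivAt_G2 {y : ℝ} (h0 : 0 < y) : HasDerivAt G2 (G3 y) y := by
  have hy1 : (0:ℝ) < 1 + y := by linarith
  have hlog : HasDerivAt Real.log y⁻¹ y := Real.hasDerivAt_log h0.ne'
  have hlog1 : HasDerivAt (fun u : ℝ => Real.log (1 + u)) (1 + y)⁻¹ y := by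
    have := (Real.hasDerivAt_log hy1.ne').comp y ((hasDerivAt_id y).const_add 1)
    simpa [Function.comp_def] using this
  have hnum : HasDerivAt (fun u : ℝ => -(6 + 8 * u)) (-8) y := by
    have : HasDerivAt (fun u : ℝ => 6 + 8 * u) 8 y := by
      simpa using ((hasDerivAt_id y).const_mul 8).const_add 6
    exact this.neg
  have hden : HasDerivAt (fun u : ℝ => u ^ 3 * (1 + u) ^ 2)
      ((3 * y ^ 2) * (1 + y) ^ 2 + y ^ 3 * (2 * (1 + y) ^ 1 * 1)) y := by
    have h1p : HasDerivAt (fun u : ℝ => (1 + u) ^ 2) (2 * (1 + y) ^ 1 * 1) y := by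
      have := (hasDerivAt_pow 2 (1 + y)).comp y ((hasDerivAt_id y).const_add 1)
      simpa [Function.comp_def] using this
    exact (hasDerivAt_pow 3 y).mul h1p
  have hdenne : y ^ 3 * (1 + y) ^ 2 ≠ 0 := by positivity
  have ha := hnum.div hden hdenne
  have hb := ((hlog.sub hlog1).const_mul 4).div (hasDerivAt_pow 3 y) (by positivity)
  have h := ha.add hb
  refine h.congr_deriv ?_
  unfold G3
  simp only [Pi.sub_apply, id]
  field_simp
  ring

/-- `f₃(y) = log(y)² + 2·Li₂(−y)` solves the fourth-order ladder ODE
`y³(y+1)f⁗ + y²(6+8y)f‴ + y(7+14y)f″ + (1+4y)f′ = 0` for `0 < y < 1`. -/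
theorem ladder_ode_solution_f3 :
    ∀ y : ℝ, 0 < y → y < 1 →
      letI f : ℝ → ℝ := fun u => (Real.log u) ^ 2 + 2 * dilog (-u)
      y ^ 3 * (y + 1) * iteratedDeriv 4 f y + y ^ 2 * (6 + 8 * y) * iteratedDeriv 3 f y
        + y * (7 + 14 * y) * iteratedDeriv 2 f y + (1 + 4 * y) * deriv f y = 0 := by
  intro y hy0 hy1
  set f : ℝ → ℝ := fun u => (Real.log u) ^ 2 + 2 * dilog (-u) with hf
  have hmem : Set.Ioo (0:ℝ) 1 ∈ nhds y := isOpen_Ioo.mem_nhds ⟨hy0, hy1⟩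
  -- deriv f = G0 on Ioo 0 1
  have hdf : ∀ x ∈ Set.Ioo (0:ℝ) 1, deriv f x = G0 x := fun x hx =>
    (deriv_f_eq hx.1 hx.2).deriv
  have hdf_ev : deriv f =ᶠ[nhds y] G0 :=
    Filter.eventuallyEq_of_mem hmem hdf
  -- iteratedDeriv 2
  have hd2 : ∀ x ∈ Set.Ioo (0:ℝ) 1, iteratedDeriv 2 f x = G1 x := by
    intro x hx
    rw [iteratedDeriv_succ, iteratedDeriv_one]
    have hev : deriv f =ᶠ[nhds x] G0 :=
      Filter.eventuallyEq_of_mem (isOpen_Ioo.mem_nhds hx) hdf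
    rw [hev.deriv_eq, (hasDerivAt_G0 hx.1).deriv]
  have hd2_ev : iteratedDeriv 2 f =ᶠ[nhds y] G1 :=
    Filter.eventuallyEq_of_mem hmem hd2
  have hd3 : ∀ x ∈ Set.Ioo (0:ℝ) 1, iteratedDeriv 3 f x = G2 x := by
    intro x hx
    rw [iteratedDeriv_succ]
    have hev : iteratedDeriv 2 f =ᶠ[nhds x] G1 :=
      Filter.eventuallyEq_of_mem (isOpen_Ioo.mem_nhds hx) hd2
    rw [hev.deriv_eq, (hasDerivAt_G1 hx.1).deriv]
  have hd4 : iteratedDeriv 4 f y = G3 y := by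
    rw [iteratedDeriv_succ]
    have hev : iteratedDeriv 3 f =ᶠ[nhds y] G2 :=
      Filter.eventuallyEq_of_mem hmem hd3
    rw [hev.deriv_eq, (hasDerivAt_G2 hy0).deriv]
  rw [hd4, hd3 y ⟨hy0, hy1⟩, hd2 y ⟨hy0, hy1⟩, hdf y ⟨hy0, hy1⟩]
  unfold G0 G1 G2 G3
  have hyne : y ≠ 0 := hy0.ne'
  have hy1ne : (1 + y) ≠ 0 := by positivity
  field_simp
  ring
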